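/- arXiv:1803.07117 — 6 statements merged into one kernel-verified Lean document; each statement's English description precedes it below -/
import Mathlib

section
/- Let n ≥ 1 and let X, Y be n×n complex matrices with 0 ≤ X ≤ Y ≤ I, Y positive definite, Tr X = p for some p with 1/100 < p < 99/100, and Tr Y = 1. Then ‖[X, ln(Y)]‖₁ ≤ 4·√(p(1−p)). -/
open scoped ComplexOrder

/-- The trace norm of a complex matrix: `Tr √(Aᴴ A)`, the sum of singular values. -/
noncomputable def traceNorm {n : ℕ} (A : Matrix (Fin n) (Fin n) ℂ) : ℝ :=
  ((Matrix.posSemidef_conjTranspose_mul_self A).1.eigenvectorUnitary.1 *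
    Matrix.diagonal ((fun x : ℝ => (x : ℂ)) ∘ (Real.sqrt ·) ∘ (Matrix.posSemidef_conjTranspose_mul_self A).1.eigenvalues) *
    (star (Matrix.posSemidef_conjTranspose_mul_self A).1.eigenvectorUnitary :
      Matrix (Fin n) (Fin n) ℂ)).trace.re

/-- For a Hermitian matrix `Y = Σⱼ yⱼ |φⱼ⟩⟨φⱼ|`, the matrix `f(Y) = Σⱼ f(yⱼ) |φⱼ⟩⟨φⱼ|`
(junk value `0` if `Y` is not Hermitian). -/
noncomputable def matFun {n : ℕ} (f : ℝ → ℝ) (Y : Matrix (Fin n) (Fin n) ℂ) :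
    Matrix (Fin n) (Fin n) ℂ :=
  if hY : Y.IsHermitian then
    (hY.eigenvectorUnitary : Matrix (Fin n) (Fin n) ℂ) *
      Matrix.diagonal (fun i => (f (hY.eigenvalues i) : ℂ)) *
      (star hY.eigenvectorUnitary : Matrix (Fin n) (Fin n) ℂ)
  else 0

open Matrix

open scoped MatrixOrder

lemma traceNorm_mat {n : ℕ} (A : Matrix (Fin n) (Fin n) ℂ) :
    traceNorm A = (CFC.sqrt (Aᴴ * A)).trace.re := by
  have hA := Matrix.posSemidef_conjTranspose_mul_self A
  rw [traceNorm, CFC.sqrt_eq_cfc, cfc_nnreal_eq_real _ (Aᴴ * A), hA.1.cfc_eq, IsHermitian.cfc,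
    Unitary.conjStarAlgAut_apply]
  congr 3
  simp only [Real.sqrt]
  rfl

theorem Matrix.PosSemidef.eq_sqrt_of_sq_eq {n : ℕ} {A B : Matrix (Fin n) (Fin n) ℂ}
    (hA : A.PosSemidef) (_hB : B.PosSemidef) (h : A ^ 2 = B) : A = CFC.sqrt B :=
  (CFC.sqrt_unique (by rw [← sq]; exact h) hA.nonneg).symm


lemma two_log_le {u : ℝ} (hu : 1 ≤ u) : 2 * Real.log u ≤ u - u⁻¹ := by
  have hderiv : ∀ z ∈ Set.Ici (1:ℝ), HasDerivAt (fun x : ℝ => x - x⁻¹ - 2 * Real.log x)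
      (1 - (-(z^2)⁻¹) - 2 * z⁻¹) z := by
    intro z hz
    have hz0 : (0:ℝ) < z := lt_of_lt_of_le one_pos hz
    exact ((hasDerivAt_id z).sub (hasDerivAt_inv hz0.ne')).sub
        ((Real.hasDerivAt_log hz0.ne').const_mul 2)
  have hmono : MonotoneOn (fun x : ℝ => x - x⁻¹ - 2 * Real.log x) (Set.Ici 1) := by
    apply monotoneOn_of_deriv_nonneg (convex_Ici 1)
    · exact fun z hz => ((hderiv z hz).continuousAt).continuousWithinAt
    · intro z hz
      rw [interior_Ici] at hz
      exact ((hderiv z (Set.mem_Ici.mpr (Set.mem_Ioi.mp hz).le)).differentiableAt).differentiableWithinAt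
    · intro z hz
      rw [interior_Ici] at hz
      rw [((hderiv z (Set.mem_Ici.mpr (Set.mem_Ioi.mp hz).le)).deriv)]
      have hz0 : (0:ℝ) < z := lt_trans one_pos hz
      have : 1 - (-(z^2)⁻¹) - 2*z⁻¹ = (1 - z⁻¹)^2 := by
        field_simp; ring
      rw [this]; positivity
  have := hmono (Set.mem_Ici.mpr le_rfl) (Set.mem_Ici.mpr hu) hu
  simp only [Real.log_one, inv_one] at this
  linarith [this]

/-- `√a√b (log a - log b) ≤ a - b` for `0 < b ≤ a`. -/
lemma sqrt_log_le {a b : ℝ} (hb : 0 < b) (hab : b ≤ a) :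
    Real.sqrt a * Real.sqrt b * (Real.log a - Real.log b) ≤ a - b := by
  have ha : 0 < a := lt_of_lt_of_le hb hab
  set u : ℝ := Real.sqrt a / Real.sqrt b with hu
  have hsb : (0:ℝ) < Real.sqrt b := Real.sqrt_pos.mpr hb
  have hsa : (0:ℝ) < Real.sqrt a := Real.sqrt_pos.mpr ha
  have hu1 : 1 ≤ u := (one_le_div hsb).mpr (Real.sqrt_le_sqrt hab)
  have hlog : Real.log a - Real.log b = 2 * Real.log u := by
    rw [hu, Real.log_div hsa.ne' hsb.ne', Real.log_sqrt ha.le, Real.log_sqrt hb.le]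
    ring
  have h2 := two_log_le hu1
  have hui : u - u⁻¹ = (a - b) / (Real.sqrt a * Real.sqrt b) := by
    rw [hu]
    rw [inv_div]
    rw [div_sub_div _ _ hsb.ne' hsa.ne']
    rw [Real.mul_self_sqrt ha.le, Real.mul_self_sqrt hb.le]
    rw [mul_comm]
  have hpos : 0 < Real.sqrt a * Real.sqrt b := mul_pos hsa hsb
  rw [hlog]
  calc Real.sqrt a * Real.sqrt b * (2 * Real.log u)
      ≤ Real.sqrt a * Real.sqrt b * (u - u⁻¹) := by
        exact mul_le_mul_of_nonneg_left h2 hpos.le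
    _ = a - b := by rw [hui]; field_simp

noncomputable def sfun (a b : ℝ) : ℝ :=
  if a = b then 1 else Real.sqrt a * Real.sqrt b * (Real.log a - Real.log b) / (a - b)

lemma sfun_symm (a b : ℝ) : sfun a b = sfun b a := by
  unfold sfun
  rcases eq_or_ne a b with h | h
  · simp [h]
  · rw [if_neg h, if_neg (Ne.symm h)]
    rw [div_eq_div_iff (sub_ne_zero.mpr h) (sub_ne_zero.mpr (Ne.symm h))]
    ring

lemma abs_sfun_le_one {a b : ℝ} (ha : 0 < a) (hb : 0 < b) : |sfun a b| ≤ 1 := by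
  have main : ∀ x y : ℝ, 0 < y → y < x → |sfun x y| ≤ 1 := by
    intro x y hy hxy
    have hx : 0 < x := lt_trans hy hxy
    unfold sfun
    rw [if_neg (ne_of_gt hxy)]
    rw [abs_div]
    rw [div_le_one (by rw [abs_pos]; exact sub_ne_zero.mpr (ne_of_gt hxy))]
    have hnum : 0 ≤ Real.sqrt x * Real.sqrt y * (Real.log x - Real.log y) := by
      apply mul_nonneg (by positivity)
      simp [sub_nonneg, Real.log_le_log_iff hy hx, hxy.le]
    rw [abs_of_nonneg hnum, abs_of_pos (by linarith : (0:ℝ) < x - y)]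
    exact sqrt_log_le hy hxy.le
  rcases lt_trichotomy a b with h | h | h
  · rw [sfun_symm]; exact main b a ha h
  · simp [sfun, h]
  · exact main a b hb h

lemma log_sub_log_eq {a b : ℝ} (ha : 0 < a) (hb : 0 < b) :
    Real.sqrt a * Real.sqrt b * (Real.log a - Real.log b) = sfun a b * (a - b) := by
  unfold sfun
  rcases eq_or_ne a b with h | h
  · simp [h]
  · rw [if_neg h]
    rw [div_mul_cancel₀ _ (sub_ne_zero.mpr h)]




lemma sqrt_congr {n : ℕ} {M N : Matrix (Fin n) (Fin n) ℂ} (h : M = N)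
    (hM : M.PosSemidef) (hN : N.PosSemidef) : CFC.sqrt M = CFC.sqrt N := by
  subst h; rfl

lemma traceNorm_eq_of {n : ℕ} {A B : Matrix (Fin n) (Fin n) ℂ} (h : Aᴴ * A = Bᴴ * B) :
    traceNorm A = traceNorm B := by
  rw [traceNorm_mat, traceNorm_mat, sqrt_congr h (Matrix.posSemidef_conjTranspose_mul_self A)
    (Matrix.posSemidef_conjTranspose_mul_self B)]

/-- diagonal entries of a PSD complex matrix have nonnegative real part -/
lemma psd_diag_re_nonneg {n : ℕ} {M : Matrix (Fin n) (Fin n) ℂ} (hM : M.PosSemidef)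
    (k : Fin n) : 0 ≤ (M k k).re := by
  have h := hM.re_dotProduct_nonneg (Pi.single k 1)
  simpa [dotProduct, Matrix.mulVec, Pi.single_apply, Finset.sum_ite_eq,
    Finset.sum_ite_eq'] using h

lemma psd_diag_eq_re {n : ℕ} {M : Matrix (Fin n) (Fin n) ℂ} (hM : M.IsHermitian)
    (k : Fin n) : M k k = ((M k k).re : ℂ) := by
  have h := congrFun (congrFun hM k) k
  rw [Matrix.conjTranspose_apply] at h
  exact (Complex.conj_eq_iff_re.mp h).symm

lemma traceNorm_conj {n : ℕ} (A U : Matrix (Fin n) (Fin n) ℂ)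
    (h1 : star U * U = 1) (h2 : U * star U = 1) :
    traceNorm (U * A * star U) = traceNorm A := by
  have hstar : star U = Uᴴ := rfl
  have hAA := Matrix.posSemidef_conjTranspose_mul_self A
  have hcand : (U * CFC.sqrt (Aᴴ * A) * star U).PosSemidef := by
    rw [hstar]
    exact (CFC.sqrt_nonneg (Aᴴ * A)).posSemidef.mul_mul_conjTranspose_same U
  have hBB : (U * A * star U)ᴴ * (U * A * star U) = U * (Aᴴ * A) * star U := by
    have hct : (U * A * Uᴴ)ᴴ = U * Aᴴ * Uᴴ := by
      simp [Matrix.conjTranspose_mul, Matrix.mul_assoc]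
    rw [hstar, hct]
    calc U * Aᴴ * Uᴴ * (U * A * Uᴴ) = U * Aᴴ * (Uᴴ * U) * A * Uᴴ := by noncomm_ring
      _ = U * (Aᴴ * A) * Uᴴ := by rw [← hstar, h1]; noncomm_ring
  have hsq : (U * CFC.sqrt (Aᴴ * A) * star U) ^ 2 = (U * A * star U)ᴴ * (U * A * star U) := by
    rw [hBB, pow_two]
    calc (U * CFC.sqrt (Aᴴ * A) * star U) * (U * CFC.sqrt (Aᴴ * A) * star U)
        = U * CFC.sqrt (Aᴴ * A) * (star U * U) * CFC.sqrt (Aᴴ * A) * star U := by noncomm_ring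
      _ = U * (CFC.sqrt (Aᴴ * A) * CFC.sqrt (Aᴴ * A)) * star U := by rw [h1]; noncomm_ring
      _ = U * (Aᴴ * A) * star U := by rw [CFC.sqrt_mul_sqrt_self _ hAA.nonneg]
  have := Matrix.PosSemidef.eq_sqrt_of_sq_eq hcand (Matrix.posSemidef_conjTranspose_mul_self _) hsq
  rw [traceNorm_mat, traceNorm_mat, ← this]
  congr 1
  rw [Matrix.trace_mul_cycle, h1, Matrix.one_mul]

lemma exists_unitary_trace {n : ℕ} (C : Matrix (Fin n) (Fin n) ℂ) (hC : Cᴴ = -C) :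
    ∃ W : Matrix (Fin n) (Fin n) ℂ, star W * W = 1 ∧ W * star W = 1 ∧
      (W * C).trace = ((traceNorm C : ℝ) : ℂ) := by
  have hH : (Complex.I • C).IsHermitian := by
    unfold Matrix.IsHermitian
    rw [Matrix.conjTranspose_smul, hC]
    simp [Complex.conj_I]
  set U : Matrix (Fin n) (Fin n) ℂ := (hH.eigenvectorUnitary : Matrix (Fin n) (Fin n) ℂ)
    with hUdef
  have hU1 : star U * U = 1 := Matrix.mem_unitaryGroup_iff'.mp hH.eigenvectorUnitary.2
  have hU2 : U * star U = 1 := Matrix.mem_unitaryGroup_iff.mp hH.eigenvectorUnitary.2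
  set μ : Fin n → ℝ := hH.eigenvalues with hμdef
  have hcast : (RCLike.ofReal ∘ μ : Fin n → ℂ) = fun j => (μ j : ℂ) := rfl
  have hspec : Complex.I • C = U * Matrix.diagonal (fun j => (μ j : ℂ)) * star U := by
    rw [← hcast]; exact hH.spectral_theorem
  have hCeq : C = (-Complex.I) • (U * Matrix.diagonal (fun j => (μ j : ℂ)) * star U) := by
    rw [← hspec, smul_smul]
    simp
  set σ : Fin n → ℝ := fun j => if 0 ≤ μ j then 1 else -1 with hσdef
  set ε : Fin n → ℂ := fun j => Complex.I * (σ j : ℂ) with hεdef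
  have hσsq : ∀ j, (σ j : ℂ) * (σ j : ℂ) = 1 := by
    intro j
    rcases le_or_gt 0 (μ j) with h | h
    · simp [hσdef, h]
    · simp [hσdef, not_le.mpr h]
  have hneg_I_mul_I : -Complex.I * Complex.I = 1 := by
    rw [neg_mul, Complex.I_mul_I, neg_neg]
  have hεstar : ∀ j, (star ε * ε) j = 1 := by
    intro j
    show star (ε j) * ε j = 1
    have h1 : star (ε j) = -Complex.I * (σ j : ℂ) := by
      rw [hεdef]
      simp only [star_mul', Complex.star_def, Complex.conj_I, Complex.conj_ofReal]
      try ring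
    rw [h1, hεdef]
    calc -Complex.I * (σ j : ℂ) * (Complex.I * (σ j : ℂ))
        = (-Complex.I * Complex.I) * ((σ j : ℂ) * (σ j : ℂ)) := by ring
      _ = 1 := by rw [hneg_I_mul_I, hσsq, one_mul]
  have hstar : star (U * Matrix.diagonal ε * star U) = U * Matrix.diagonal (star ε) * star U := by
    show (U * Matrix.diagonal ε * Uᴴ)ᴴ = _
    rw [Matrix.conjTranspose_mul, Matrix.conjTranspose_mul, Matrix.conjTranspose_conjTranspose,
      Matrix.diagonal_conjTranspose, ← Matrix.mul_assoc]
    rfl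
  refine ⟨U * Matrix.diagonal ε * star U, ?_, ?_, ?_⟩
  · rw [hstar]
    calc U * Matrix.diagonal (star ε) * star U * (U * Matrix.diagonal ε * star U)
        = U * (Matrix.diagonal (star ε) * (star U * U) * Matrix.diagonal ε) * star U := by
          noncomm_ring
      _ = 1 := by
          rw [hU1, Matrix.mul_one, Matrix.diagonal_mul_diagonal]
          have h1 : (fun i => star ε i * ε i) = fun _ => (1:ℂ) := funext fun j => hεstar j
          rw [h1, Matrix.diagonal_one, Matrix.mul_one, hU2]
  · rw [hstar]
    calc U * Matrix.diagonal ε * star U * (U * Matrix.diagonal (star ε) * star U)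
        = U * (Matrix.diagonal ε * (star U * U) * Matrix.diagonal (star ε)) * star U := by
          noncomm_ring
      _ = 1 := by
          rw [hU1, Matrix.mul_one, Matrix.diagonal_mul_diagonal]
          have h1 : (fun i => ε i * star ε i) = fun _ => (1:ℂ) := by
            funext j
            rw [mul_comm]
            exact hεstar j
          rw [h1, Matrix.diagonal_one, Matrix.mul_one, hU2]
  · -- trace computation
    have htr : (U * Matrix.diagonal ε * star U * C).trace = ∑ j, ((|μ j| : ℝ) : ℂ) := by
      rw [hCeq, Matrix.mul_smul, Matrix.trace_smul]
      have hmm : U * Matrix.diagonal ε * star U *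
            (U * Matrix.diagonal (fun j => (μ j : ℂ)) * star U)
          = U * (Matrix.diagonal (fun j => ε j * (μ j : ℂ))) * star U := by
        calc U * Matrix.diagonal ε * star U * (U * Matrix.diagonal (fun j => (μ j : ℂ)) * star U)
            = U * (Matrix.diagonal ε * (star U * U) *
                Matrix.diagonal (fun j => (μ j : ℂ))) * star U := by noncomm_ring
          _ = _ := by rw [hU1, Matrix.mul_one, Matrix.diagonal_mul_diagonal]
      rw [hmm, Matrix.trace_mul_cycle, hU1, Matrix.one_mul, Matrix.trace_diagonal]
      rw [Finset.smul_sum]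
      congr 1
      funext j
      rw [smul_eq_mul, hεdef]
      calc -Complex.I * (Complex.I * (σ j : ℂ) * (μ j : ℂ))
          = (-Complex.I * Complex.I) * ((σ j : ℂ) * (μ j : ℂ)) := by ring
        _ = (σ j : ℂ) * (μ j : ℂ) := by rw [hneg_I_mul_I, one_mul]
        _ = ((|μ j| : ℝ) : ℂ) := by
            rcases le_or_gt 0 (μ j) with h | h
            · rw [hσdef]
              simp [h, abs_of_nonneg h]
            · rw [hσdef]
              simp only [if_neg (not_le.mpr h), abs_of_neg h]
              push_cast
              ring
    rw [htr]
    have hCC : Cᴴ * C = U * Matrix.diagonal (fun j => ((μ j : ℂ) * (μ j : ℂ))) * star U := by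
      rw [hC]
      have hH2 : -C * C = (Complex.I • C) * (Complex.I • C) := by
        rw [Matrix.smul_mul, Matrix.mul_smul, smul_smul, Complex.I_mul_I, neg_one_smul,
          Matrix.neg_mul]
      rw [hH2, hspec]
      calc (U * Matrix.diagonal (fun j => (μ j : ℂ)) * star U) *
            (U * Matrix.diagonal (fun j => (μ j : ℂ)) * star U)
          = U * (Matrix.diagonal (fun j => (μ j : ℂ)) * (star U * U) *
              Matrix.diagonal (fun j => (μ j : ℂ))) * star U := by noncomm_ring
        _ = _ := by rw [hU1, Matrix.mul_one, Matrix.diagonal_mul_diagonal]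
    have hPSDd : (Matrix.diagonal (fun j => ((|μ j| : ℝ) : ℂ))).PosSemidef := by
      apply Matrix.PosSemidef.diagonal
      intro j
      exact Complex.zero_le_real.mpr (abs_nonneg _)
    have hcand : (U * Matrix.diagonal (fun j => ((|μ j| : ℝ) : ℂ)) * star U).PosSemidef := by
      have := hPSDd.mul_mul_conjTranspose_same U
      exact this
    have hsq : (U * Matrix.diagonal (fun j => ((|μ j| : ℝ) : ℂ)) * star U) ^ 2 = Cᴴ * C := by
      rw [pow_two, hCC]
      calc (U * Matrix.diagonal (fun j => ((|μ j| : ℝ) : ℂ)) * star U) *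
            (U * Matrix.diagonal (fun j => ((|μ j| : ℝ) : ℂ)) * star U)
          = U * (Matrix.diagonal (fun j => ((|μ j| : ℝ) : ℂ)) * (star U * U) *
              Matrix.diagonal (fun j => ((|μ j| : ℝ) : ℂ))) * star U := by noncomm_ring
        _ = _ := by
            rw [hU1, Matrix.mul_one, Matrix.diagonal_mul_diagonal]
            have hd : (fun i => ((|μ i| : ℝ) : ℂ) * ((|μ i| : ℝ) : ℂ))
                = fun j => ((μ j : ℂ) * (μ j : ℂ)) := by
              funext j
              rw [← Complex.ofReal_mul, abs_mul_abs_self, Complex.ofReal_mul]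
            rw [hd]
    have hsqrt := Matrix.PosSemidef.eq_sqrt_of_sq_eq hcand
      (Matrix.posSemidef_conjTranspose_mul_self C) hsq
    rw [traceNorm_mat, ← hsqrt]
    rw [Matrix.trace_mul_cycle, hU1, Matrix.one_mul, Matrix.trace_diagonal]
    rw [← Complex.ofReal_sum, Complex.ofReal_re]



/-- Cauchy–Schwarz for double sums of complex numbers. -/
lemma cs2 {n : ℕ} (f g : Fin n → Fin n → ℂ) :
    ‖∑ j, ∑ k, f j k * g j k‖ ≤
      Real.sqrt (∑ j, ∑ k, ‖f j k‖ ^ 2) *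
        Real.sqrt (∑ j, ∑ k, ‖g j k‖ ^ 2) := by
  have h1 : ‖∑ j, ∑ k, f j k * g j k‖ ≤
      ∑ j, ∑ k, ‖f j k‖ * ‖g j k‖ := by
    refine le_trans (norm_sum_le _ _) (Finset.sum_le_sum fun j _ => ?_)
    refine le_trans (norm_sum_le _ _) (Finset.sum_le_sum fun k _ => ?_)
    exact le_of_eq (norm_mul _ _)
  refine le_trans h1 ?_
  have h2 : (∑ j, ∑ k, ‖f j k‖ * ‖g j k‖) ^ 2 ≤
      (∑ j, ∑ k, ‖f j k‖ ^ 2) * (∑ j, ∑ k, ‖g j k‖ ^ 2) := by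
    have := Finset.sum_mul_sq_le_sq_mul_sq Finset.univ
      (fun x : Fin n × Fin n => ‖f x.1 x.2‖)
      (fun x : Fin n × Fin n => ‖g x.1 x.2‖)
    simpa [Fintype.sum_prod_type] using this
  have hnn : 0 ≤ ∑ j, ∑ k, ‖f j k‖ * ‖g j k‖ :=
    Finset.sum_nonneg fun j _ => Finset.sum_nonneg fun k _ =>
      mul_nonneg (norm_nonneg _) (norm_nonneg _)
  have := Real.sqrt_le_sqrt h2
  rw [Real.sqrt_sq hnn, Real.sqrt_mul (Finset.sum_nonneg fun j _ =>
    Finset.sum_nonneg fun k _ => sq_nonneg _)] at this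
  exact this

lemma central_bound {n : ℕ} (y : Fin n → ℝ) (hy0 : ∀ j, 0 < y j) (hy1 : ∀ j, y j ≤ 1)
    (hysum : ∑ j, y j ≤ 1)
    (X' W : Matrix (Fin n) (Fin n) ℂ) (hX' : X'.PosSemidef)
    (hXy : (Matrix.diagonal (fun j => (y j : ℂ)) - X').PosSemidef)
    (hW1 : star W * W = 1) (hW2 : W * star W = 1) :
    ‖(W * (X' * Matrix.diagonal (fun j => (Real.log (y j) : ℂ)) -
      Matrix.diagonal (fun j => (Real.log (y j) : ℂ)) * X')).trace‖ ≤
      2 * Real.sqrt (2 * X'.trace.re) := by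
  classical
  set sq : Fin n → ℝ := fun j => Real.sqrt (y j) with hsqdef
  have hsq0 : ∀ j, 0 < sq j := fun j => Real.sqrt_pos.mpr (hy0 j)
  have hsqC : ∀ j, (sq j : ℂ) ≠ 0 := fun j => Complex.ofReal_ne_zero.mpr (hsq0 j).ne'
  have hsqsq : ∀ j, sq j * sq j = y j := fun j => Real.mul_self_sqrt (hy0 j).le
  set E : Matrix (Fin n) (Fin n) ℂ := Matrix.diagonal (fun j => ((sq j)⁻¹ : ℂ)) with hEdef
  have hEH : Eᴴ = E := by
    rw [hEdef, Matrix.diagonal_conjTranspose]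
    have h1 : (star fun j => ((sq j : ℂ))⁻¹) = fun j => ((sq j : ℂ))⁻¹ := by
      funext j
      simp [Pi.star_apply, Complex.star_def, ← Complex.ofReal_inv, Complex.conj_ofReal]
    rw [h1]
  set K : Matrix (Fin n) (Fin n) ℂ := E * X' * E with hKdef
  have hKps : K.PosSemidef := by
    have := hX'.mul_mul_conjTranspose_same E
    rwa [hEH] at this
  have hEyE : E * Matrix.diagonal (fun j => (y j : ℂ)) * E = 1 := by
    simp only [hEdef, Matrix.diagonal_mul_diagonal]
    have h1 : (fun i => ((sq i : ℂ))⁻¹ * (y i : ℂ) * ((sq i : ℂ))⁻¹) = fun _ => (1:ℂ) := by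
      funext j
      rw [← hsqsq j]
      push_cast
      field_simp
      try exact div_self (hsqC j)
    rw [h1, Matrix.diagonal_one]
  have hK1 : ((1 : Matrix (Fin n) (Fin n) ℂ) - K).PosSemidef := by
    have h2 := hXy.mul_mul_conjTranspose_same E
    rw [hEH] at h2
    have : E * (Matrix.diagonal (fun j => (y j : ℂ)) - X') * E = 1 - K := by
      rw [Matrix.mul_sub, Matrix.sub_mul, hEyE, hKdef]
    rwa [this] at h2
  have hKK : (K - K * K).PosSemidef := by
    obtain ⟨R, hRps, hRR⟩ : ∃ R : Matrix (Fin n) (Fin n) ℂ, R.PosSemidef ∧ R * R = K :=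
      ⟨CFC.sqrt K, (CFC.sqrt_nonneg K).posSemidef, CFC.sqrt_mul_sqrt_self K hKps.nonneg⟩
    have hRH : Rᴴ = R := hRps.isHermitian
    have h3 := hK1.mul_mul_conjTranspose_same R
    rw [hRH] at h3
    have heq : R * (1 - K) * R = K - K * K := by
      rw [Matrix.mul_sub, Matrix.mul_one, Matrix.sub_mul, hRR]
      congr 1
      rw [← hRR]
      simp only [Matrix.mul_assoc]
    rwa [heq] at h3
  have hKH : K.IsHermitian := hKps.isHermitian
  -- entry formulas
  have hKentry : ∀ k j, K k j = ((sq k)⁻¹ : ℂ) * X' k j * ((sq j)⁻¹ : ℂ) := by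
    intro k j
    rw [hKdef, Matrix.mul_diagonal, Matrix.diagonal_mul]
  have hXentry : ∀ k j, X' k j = (sq k : ℂ) * K k j * (sq j : ℂ) := by
    intro k j
    rw [hKentry k j]
    field_simp
    rw [eq_div_iff (mul_ne_zero (hsqC k) (hsqC j))]
    ring
  -- trace as double sum
  set d : Fin n → ℂ := fun j => (Real.log (y j) : ℂ) with hddef
  set M : Matrix (Fin n) (Fin n) ℂ := X' * Matrix.diagonal d - Matrix.diagonal d * X' with hMdef
  have htr : (W * M).trace = ∑ j, ∑ k, W j k * M k j := by
    simp [Matrix.trace, Matrix.mul_apply, Matrix.diag]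
  have hMkj : ∀ k j, M k j = X' k j * (d j - d k) := by
    intro k j
    rw [hMdef, Matrix.sub_apply, Matrix.mul_diagonal, Matrix.diagonal_mul]
    ring
  -- pointwise decomposition
  set s : Fin n → Fin n → ℝ := fun j k => sfun (y j) (y k) with hsdef
  set A1 : Fin n → Fin n → ℂ := fun j k => ((sq j * s j k : ℝ) : ℂ) * W j k with hA1def
  set A2 : Fin n → Fin n → ℂ := fun j k => ((s j k * sq k : ℝ) : ℂ) * W j k with hA2def
  set Q : Fin n → Fin n → ℂ := fun j k => ((sq j - sq k : ℝ) : ℂ) * K k j with hQdef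
  have hpoint : ∀ j k, W j k * M k j = A1 j k * Q j k + A2 j k * Q j k := by
    intro j k
    rw [hMkj k j, hXentry k j]
    have hlog : sq j * sq k * (Real.log (y j) - Real.log (y k)) = s j k * (y j - y k) :=
      log_sub_log_eq (hy0 j) (hy0 k)
    have hreal : (sq j * s j k) * (sq j - sq k) + (s j k * sq k) * (sq j - sq k)
        = sq k * sq j * (Real.log (y j) - Real.log (y k)) := by
      have h1 := hsqsq j
      have h2 := hsqsq k
      linear_combination s j k * h1 - s j k * h2 - hlog
    have hrealC := congrArg (fun t : ℝ => (t : ℂ)) hreal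
    push_cast at hrealC
    rw [hA1def, hA2def, hQdef, hddef]
    simp only
    symm
    calc ((sq j * s j k : ℝ) : ℂ) * W j k * (((sq j - sq k : ℝ) : ℂ) * K k j)
          + ((s j k * sq k : ℝ) : ℂ) * W j k * (((sq j - sq k : ℝ) : ℂ) * K k j)
        = W j k * K k j * (((sq j * s j k : ℝ):ℂ) * ((sq j : ℂ) - (sq k : ℂ))
            + ((s j k * sq k : ℝ):ℂ) * ((sq j : ℂ) - (sq k : ℂ))) := by push_cast; ring
      _ = W j k * K k j * ((sq k : ℂ) * (sq j : ℂ) *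
            ((Real.log (y j) : ℂ) - (Real.log (y k) : ℂ))) := by rw [← hrealC]; push_cast; ring
      _ = W j k * ((sq k : ℂ) * K k j * (sq j : ℂ) *
            ((Real.log (y j) : ℂ) - (Real.log (y k) : ℂ))) := by ring
  have hsqpow : ∀ j, sq j ^ 2 = y j := by
    intro j; rw [hsqdef]; exact Real.sq_sqrt (hy0 j).le
  have habs_eq : ∀ z : ℂ, z * star z = ((‖z‖ ^ 2 : ℝ) : ℂ) := by
    intro z
    rw [Complex.star_def, Complex.mul_conj, Complex.normSq_eq_norm_sq]
  have hrow : ∀ j, ∑ k, ‖W j k‖ ^ 2 = 1 := by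
    intro j
    have h := congrFun (congrFun hW2 j) j
    rw [Matrix.mul_apply] at h
    have h2 : ∀ k, W j k * (star W) k j = ((‖W j k‖ ^ 2 : ℝ) : ℂ) := by
      intro k
      rw [Matrix.star_apply]
      exact habs_eq _
    rw [Finset.sum_congr rfl (fun k _ => h2 k), Matrix.one_apply_eq] at h
    have h3 := congrArg Complex.re h
    rw [Complex.re_sum] at h3
    simpa [← Complex.ofReal_pow] using h3
  have hcol : ∀ k, ∑ j, ‖W j k‖ ^ 2 = 1 := by
    intro k
    have h := congrFun (congrFun hW1 k) k
    rw [Matrix.mul_apply] at h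
    have h2 : ∀ j, (star W) k j * W j k = ((‖W j k‖ ^ 2 : ℝ) : ℂ) := by
      intro j
      rw [Matrix.star_apply, mul_comm]
      exact habs_eq _
    rw [Finset.sum_congr rfl (fun j _ => h2 j), Matrix.one_apply_eq] at h
    have h3 := congrArg Complex.re h
    rw [Complex.re_sum] at h3
    simpa [← Complex.ofReal_pow] using h3
  have hKstar : ∀ k j, K k j = star (K j k) := by
    intro k j
    have h' := congrFun (congrFun hKH k) j
    rw [Matrix.conjTranspose_apply] at h'
    exact h'.symm
  have hKsym : ∀ k j, ‖K k j‖ = ‖K j k‖ := by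
    intro k j
    rw [hKstar k j, Complex.star_def, Complex.norm_conj]
  have hKrow : ∀ j, (∑ k, ‖K j k‖ ^ 2) ≤ (K j j).re := by
    intro j
    have hKKjj : ((K * K) j j).re = ∑ k, ‖K j k‖ ^ 2 := by
      rw [Matrix.mul_apply]
      have h2 : ∀ k, K j k * K k j = ((‖K j k‖ ^ 2 : ℝ) : ℂ) := by
        intro k
        rw [hKstar k j]
        exact habs_eq _
      rw [Finset.sum_congr rfl (fun k _ => h2 k), Complex.re_sum]
      simp [← Complex.ofReal_pow]
    have hd := psd_diag_re_nonneg hKK j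
    rw [Matrix.sub_apply, Complex.sub_re] at hd
    linarith [hKKjj]
  have hXdiag : ∀ j, (X' j j).re = y j * (K j j).re := by
    intro j
    rw [hXentry j j]
    have h1 : (sq j : ℂ) * K j j * (sq j : ℂ) = ((y j : ℝ) : ℂ) * K j j := by
      rw [← hsqsq j]; push_cast; ring
    rw [h1, Complex.re_ofReal_mul]
  have htrace_re : X'.trace.re = ∑ j, (X' j j).re := by
    rw [Matrix.trace, Complex.re_sum]
    rfl
  have hp0 : 0 ≤ X'.trace.re := by
    rw [htrace_re]
    exact Finset.sum_nonneg fun j _ => psd_diag_re_nonneg hX' j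
  have hwrow : ∀ j, y j * (∑ k, ‖K j k‖ ^ 2) ≤ (X' j j).re := by
    intro j
    rw [hXdiag j]
    exact mul_le_mul_of_nonneg_left (hKrow j) (hy0 j).le
  -- bound on Q
  have hQbound : (∑ j, ∑ k, ‖Q j k‖ ^ 2) ≤ 2 * X'.trace.re := by
    have hterm : ∀ j k : Fin n, ‖Q j k‖ ^ 2
        ≤ (y j + y k) * ‖K k j‖ ^ 2 := by
      intro j k
      rw [hQdef]
      simp only
      rw [norm_mul, mul_pow, Complex.norm_real, Real.norm_eq_abs, sq_abs]
      have h2 : (sq j - sq k) ^ 2 ≤ y j + y k := by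
        nlinarith [hsqpow j, hsqpow k, mul_nonneg (hsq0 j).le (hsq0 k).le]
      exact mul_le_mul_of_nonneg_right h2 (sq_nonneg _)
    have hs1 : (∑ j, ∑ k, y j * ‖K k j‖ ^ 2) ≤ X'.trace.re := by
      rw [htrace_re]
      refine Finset.sum_le_sum fun j _ => ?_
      rw [← Finset.mul_sum]
      have he : (∑ k, ‖K k j‖ ^ 2) = ∑ k, ‖K j k‖ ^ 2 := by
        refine Finset.sum_congr rfl fun k _ => by rw [hKsym k j]
      rw [he]
      exact hwrow j
    have hs2 : (∑ j, ∑ k, y k * ‖K k j‖ ^ 2) ≤ X'.trace.re := by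
      rw [Finset.sum_comm, htrace_re]
      refine Finset.sum_le_sum fun k _ => ?_
      rw [← Finset.mul_sum]
      exact hwrow k
    calc (∑ j, ∑ k, ‖Q j k‖ ^ 2)
        ≤ ∑ j, ∑ k, (y j + y k) * ‖K k j‖ ^ 2 :=
          Finset.sum_le_sum fun j _ => Finset.sum_le_sum fun k _ => hterm j k
      _ = (∑ j, ∑ k, y j * ‖K k j‖ ^ 2)
            + (∑ j, ∑ k, y k * ‖K k j‖ ^ 2) := by
          rw [← Finset.sum_add_distrib]
          refine Finset.sum_congr rfl fun j _ => ?_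
          rw [← Finset.sum_add_distrib]
          refine Finset.sum_congr rfl fun k _ => ?_
          ring
      _ ≤ X'.trace.re + X'.trace.re := add_le_add hs1 hs2
      _ = 2 * X'.trace.re := by ring
  -- bounds on A1, A2
  have hsbound : ∀ j k : Fin n, (s j k) ^ 2 ≤ 1 := by
    intro j k
    rw [← sq_abs]
    have := abs_sfun_le_one (hy0 j) (hy0 k)
    nlinarith [abs_nonneg (s j k)]
  have hA1bound : (∑ j, ∑ k, ‖A1 j k‖ ^ 2) ≤ 1 := by
    have hterm : ∀ j k : Fin n, ‖A1 j k‖ ^ 2 ≤ y j * ‖W j k‖ ^ 2 := by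
      intro j k
      rw [hA1def]
      simp only
      rw [norm_mul, mul_pow, Complex.norm_real, Real.norm_eq_abs, sq_abs]
      have h2 : (sq j * s j k) ^ 2 ≤ y j := by
        rw [mul_pow, hsqpow j]
        nlinarith [hsbound j k, (hy0 j).le]
      exact mul_le_mul_of_nonneg_right h2 (sq_nonneg _)
    calc (∑ j, ∑ k, ‖A1 j k‖ ^ 2)
        ≤ ∑ j, ∑ k, y j * ‖W j k‖ ^ 2 :=
          Finset.sum_le_sum fun j _ => Finset.sum_le_sum fun k _ => hterm j k
      _ = ∑ j, y j := by
          refine Finset.sum_congr rfl fun j _ => ?_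
          rw [← Finset.mul_sum, hrow j, mul_one]
      _ ≤ 1 := hysum
  have hA2bound : (∑ j, ∑ k, ‖A2 j k‖ ^ 2) ≤ 1 := by
    have hterm : ∀ j k : Fin n, ‖A2 j k‖ ^ 2 ≤ y k * ‖W j k‖ ^ 2 := by
      intro j k
      rw [hA2def]
      simp only
      rw [norm_mul, mul_pow, Complex.norm_real, Real.norm_eq_abs, sq_abs]
      have h2 : (s j k * sq k) ^ 2 ≤ y k := by
        rw [mul_pow, hsqpow k]
        nlinarith [hsbound j k, (hy0 k).le]
      exact mul_le_mul_of_nonneg_right h2 (sq_nonneg _)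
    calc (∑ j, ∑ k, ‖A2 j k‖ ^ 2)
        ≤ ∑ j, ∑ k, y k * ‖W j k‖ ^ 2 :=
          Finset.sum_le_sum fun j _ => Finset.sum_le_sum fun k _ => hterm j k
      _ = ∑ k, y k := by
          rw [Finset.sum_comm]
          refine Finset.sum_congr rfl fun k _ => ?_
          rw [← Finset.mul_sum, hcol k, mul_one]
      _ ≤ 1 := hysum
  -- assemble
  have hQnn : 0 ≤ ∑ j, ∑ k, ‖Q j k‖ ^ 2 :=
    Finset.sum_nonneg fun j _ => Finset.sum_nonneg fun k _ => sq_nonneg _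
  have hsplit : (W * M).trace = (∑ j, ∑ k, A1 j k * Q j k) + (∑ j, ∑ k, A2 j k * Q j k) := by
    rw [htr]
    calc (∑ j, ∑ k, W j k * M k j)
        = ∑ j, ∑ k, (A1 j k * Q j k + A2 j k * Q j k) :=
          Finset.sum_congr rfl fun j _ => Finset.sum_congr rfl fun k _ => hpoint j k
      _ = _ := by
          rw [← Finset.sum_add_distrib]
          refine Finset.sum_congr rfl fun j _ => ?_
          rw [← Finset.sum_add_distrib]
  have hfin1 : Real.sqrt (∑ j, ∑ k, ‖A1 j k‖ ^ 2) ≤ 1 := by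
    rw [show (1:ℝ) = Real.sqrt 1 by rw [Real.sqrt_one]]
    exact Real.sqrt_le_sqrt hA1bound
  have hfin2 : Real.sqrt (∑ j, ∑ k, ‖A2 j k‖ ^ 2) ≤ 1 := by
    rw [show (1:ℝ) = Real.sqrt 1 by rw [Real.sqrt_one]]
    exact Real.sqrt_le_sqrt hA2bound
  have hfinQ : Real.sqrt (∑ j, ∑ k, ‖Q j k‖ ^ 2) ≤ Real.sqrt (2 * X'.trace.re) :=
    Real.sqrt_le_sqrt hQbound
  calc ‖(W * M).trace‖
      ≤ ‖∑ j, ∑ k, A1 j k * Q j k‖ + ‖∑ j, ∑ k, A2 j k * Q j k‖ := by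
        rw [hsplit]
        exact norm_add_le _ _
    _ ≤ Real.sqrt (∑ j, ∑ k, ‖A1 j k‖ ^ 2)
          * Real.sqrt (∑ j, ∑ k, ‖Q j k‖ ^ 2)
        + Real.sqrt (∑ j, ∑ k, ‖A2 j k‖ ^ 2)
          * Real.sqrt (∑ j, ∑ k, ‖Q j k‖ ^ 2) :=
        add_le_add (cs2 A1 Q) (cs2 A2 Q)
    _ ≤ 1 * Real.sqrt (2 * X'.trace.re) + 1 * Real.sqrt (2 * X'.trace.re) :=
        add_le_add
          (mul_le_mul hfin1 hfinQ (Real.sqrt_nonneg _) zero_le_one)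
          (mul_le_mul hfin2 hfinQ (Real.sqrt_nonneg _) zero_le_one)
    _ = 2 * Real.sqrt (2 * X'.trace.re) := by ring

lemma skew_comm {n : ℕ} (A B : Matrix (Fin n) (Fin n) ℂ) (hA : Aᴴ = A) (hB : Bᴴ = B) :
    (A * B - B * A)ᴴ = -(A * B - B * A) := by
  rw [Matrix.conjTranspose_sub, Matrix.conjTranspose_mul, Matrix.conjTranspose_mul, hA, hB]
  exact (neg_sub _ _).symm

theorem mixing_rate_lieb_vershynina {n : ℕ} (hn : 1 ≤ n)
    (X Y : Matrix (Fin n) (Fin n) ℂ) (p : ℝ) (hp0 : 1 / 100 < p) (hp1 : p < 99 / 100)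
    (hX : X.PosSemidef) (hXY : (Y - X).PosSemidef)
    (hYI : ((1 : Matrix (Fin n) (Fin n) ℂ) - Y).PosSemidef) (hY : Y.PosDef)
    (hTrX : X.trace = (p : ℂ)) (hTrY : Y.trace = 1) :
    traceNorm (X * matFun Real.log Y - matFun Real.log Y * X) ≤
      4 * Real.sqrt (p * (1 - p)) := by
  classical
  have hp01 : 0 < p := lt_trans (by norm_num) hp0
  have hp1' : p < 1 := lt_trans hp1 (by norm_num)
  have hYH : Y.IsHermitian := hY.isHermitian
  set U : Matrix (Fin n) (Fin n) ℂ := (hYH.eigenvectorUnitary : Matrix (Fin n) (Fin n) ℂ)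
    with hUdef
  have hU1 : star U * U = 1 := Matrix.mem_unitaryGroup_iff'.mp hYH.eigenvectorUnitary.2
  have hU2 : U * star U = 1 := Matrix.mem_unitaryGroup_iff.mp hYH.eigenvectorUnitary.2
  set y : Fin n → ℝ := hYH.eigenvalues with hydef
  have hy0 : ∀ j, 0 < y j := fun j => hY.eigenvalues_pos j
  have hcast : (RCLike.ofReal ∘ y : Fin n → ℂ) = fun j => (y j : ℂ) := rfl
  have hdiagY : star U * Y * U = Matrix.diagonal (fun j => (y j : ℂ)) := by
    rw [← hcast]
    have := hYH.conjStarAlgAut_star_eigenvectorUnitary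
    rwa [Unitary.conjStarAlgAut_apply, Unitary.coe_star, star_star] at this
  -- sum of eigenvalues
  have hysumC : ∑ j, (y j : ℂ) = 1 := by
    have h1 : (Matrix.diagonal (fun j => (y j : ℂ))).trace = Y.trace := by
      rw [← hdiagY, Matrix.trace_mul_cycle, hU2, Matrix.one_mul]
    rw [Matrix.trace_diagonal] at h1
    rw [h1, hTrY]
  have hysum : ∑ j, y j = 1 := by
    have := congrArg Complex.re hysumC
    rw [Complex.re_sum] at this
    simpa using this
  -- eigenvalues ≤ 1
  have hy1 : ∀ j, y j ≤ 1 := by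
    intro j
    have h1 := hYI.conjTranspose_mul_mul_same U
    have h2 : Uᴴ * (1 - Y) * U = 1 - Matrix.diagonal (fun j => (y j : ℂ)) := by
      rw [Matrix.mul_sub, Matrix.sub_mul, Matrix.mul_one]
      rw [show Uᴴ = star U from rfl, hU1, hdiagY]
    rw [h2] at h1
    have h3 := psd_diag_re_nonneg h1 j
    rw [Matrix.sub_apply, Matrix.one_apply_eq, Matrix.diagonal_apply_eq, Complex.sub_re,
      Complex.one_re, Complex.ofReal_re] at h3
    linarith
  -- conjugated matrices
  set X' : Matrix (Fin n) (Fin n) ℂ := star U * X * U with hX'def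
  have hX'ps : X'.PosSemidef := by
    have := hX.conjTranspose_mul_mul_same U
    rwa [show Uᴴ = star U from rfl] at this
  have hXyps : (Matrix.diagonal (fun j => (y j : ℂ)) - X').PosSemidef := by
    have h1 := hXY.conjTranspose_mul_mul_same U
    have h2 : Uᴴ * (Y - X) * U = Matrix.diagonal (fun j => (y j : ℂ)) - X' := by
      rw [Matrix.mul_sub, Matrix.sub_mul, show Uᴴ = star U from rfl, hdiagY, hX'def]
    rwa [h2] at h1
  have hX'tr : X'.trace = (p : ℂ) := by
    rw [hX'def, Matrix.trace_mul_cycle, hU2, Matrix.one_mul, hTrX]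
  have hX'tre : X'.trace.re = p := by rw [hX'tr, Complex.ofReal_re]
  set D : Matrix (Fin n) (Fin n) ℂ := Matrix.diagonal (fun j => (Real.log (y j) : ℂ)) with hDdef
  have hmat : matFun Real.log Y = U * D * star U := by
    rw [matFun, dif_pos hYH]
  -- conjugation identity
  have hconj : X * matFun Real.log Y - matFun Real.log Y * X
      = U * (X' * D - D * X') * star U := by
    rw [hmat, hX'def]
    rw [Matrix.mul_sub, Matrix.sub_mul]
    congr 1
    · symm
      calc U * (star U * X * U * D) * star U
          = (U * star U) * X * (U * D * star U) := by noncomm_ring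
        _ = X * (U * D * star U) := by rw [hU2, Matrix.one_mul]
    · symm
      calc U * (D * (star U * X * U)) * star U
          = (U * D * star U) * X * (U * star U) := by noncomm_ring
        _ = U * D * star U * X := by rw [hU2, Matrix.mul_one]
  rw [hconj, traceNorm_conj _ U hU1 hU2]
  set C : Matrix (Fin n) (Fin n) ℂ := X' * D - D * X' with hCdef
  have hDH : Dᴴ = D := by
    rw [hDdef, Matrix.diagonal_conjTranspose]
    have h1 : (star fun j => ((Real.log (y j) : ℝ) : ℂ)) = fun j => ((Real.log (y j) : ℝ) : ℂ) := by
      funext j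
      simp [Pi.star_apply, Complex.star_def, Complex.conj_ofReal]
    rw [h1]
  have hX'H : X'ᴴ = X' := hX'ps.isHermitian
  have hCsk : Cᴴ = -C := by
    rw [hCdef]
    exact skew_comm X' D hX'H hDH
  obtain ⟨W, hW1, hW2, hWtr⟩ := exists_unitary_trace C hCsk
  have htn : traceNorm C ≤ ‖(W * C).trace‖ := by
    rw [hWtr]
    rw [Complex.norm_real, Real.norm_eq_abs]
    exact le_abs_self _
  -- two bounds
  have hb1 : ‖(W * C).trace‖ ≤ 2 * Real.sqrt (2 * p) := by
    have h := central_bound y hy0 hy1 (le_of_eq hysum) X' W hX'ps hXyps hW1 hW2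
    rw [hX'tre] at h
    simp only [hCdef, hDdef]
    exact h
  have hb2 : ‖(W * C).trace‖ ≤ 2 * Real.sqrt (2 * (1 - p)) := by
    set X'' : Matrix (Fin n) (Fin n) ℂ := Matrix.diagonal (fun j => (y j : ℂ)) - X' with hX''def
    have hX''ps : X''.PosSemidef := hXyps
    have hXy'' : (Matrix.diagonal (fun j => (y j : ℂ)) - X'').PosSemidef := by
      have heq : Matrix.diagonal (fun j => (y j : ℂ)) - X'' = X' := by
        rw [hX''def, sub_sub_cancel]
      rwa [heq]
    have hX''tr : X''.trace.re = 1 - p := by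
      rw [hX''def, Matrix.trace_sub, Matrix.trace_diagonal, hysumC, hX'tr]
      simp
    have h := central_bound y hy0 hy1 (le_of_eq hysum) X'' W hX''ps hXy'' hW1 hW2
    rw [hX''tr] at h
    have hcomm : Matrix.diagonal (fun j => (y j : ℂ)) *
          Matrix.diagonal (fun j => (Real.log (y j) : ℂ))
        = Matrix.diagonal (fun j => (Real.log (y j) : ℂ)) *
          Matrix.diagonal (fun j => (y j : ℂ)) := by
      rw [Matrix.diagonal_mul_diagonal, Matrix.diagonal_mul_diagonal]
      have h1 : (fun i => (y i : ℂ) * (Real.log (y i) : ℂ))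
          = (fun i => (Real.log (y i) : ℂ) * (y i : ℂ)) := by
        funext i; ring
      rw [h1]
    have hCneg : X'' * Matrix.diagonal (fun j => (Real.log (y j) : ℂ))
        - Matrix.diagonal (fun j => (Real.log (y j) : ℂ)) * X'' = -C := by
      rw [hCdef, hDdef, hX''def, Matrix.sub_mul, Matrix.mul_sub, hcomm]
      abel
    rw [hCneg, Matrix.mul_neg, Matrix.trace_neg, norm_neg] at h
    exact h
  have hs4 : Real.sqrt 4 = 2 := by
    rw [show (4:ℝ) = 2^2 by norm_num, Real.sqrt_sq (by norm_num : (0:ℝ) ≤ 2)]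
  rcases le_or_gt p (1/2) with hc | hc
  · refine le_trans htn (le_trans hb1 ?_)
    have h1 : 2 * Real.sqrt (2 * p) = Real.sqrt (8 * p) := by
      rw [show (8:ℝ) * p = 4 * (2 * p) by ring, Real.sqrt_mul (by norm_num : (0:ℝ) ≤ 4), hs4]
    have h2 : 4 * Real.sqrt (p * (1 - p)) = Real.sqrt (16 * (p * (1 - p))) := by
      rw [Real.sqrt_mul (by norm_num : (0:ℝ) ≤ 16)]
      rw [show Real.sqrt 16 = 4 by
        rw [show (16:ℝ) = 4^2 by norm_num, Real.sqrt_sq (by norm_num : (0:ℝ) ≤ 4)]]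
    rw [h1, h2]
    apply Real.sqrt_le_sqrt
    nlinarith
  · refine le_trans htn (le_trans hb2 ?_)
    have h1 : 2 * Real.sqrt (2 * (1 - p)) = Real.sqrt (8 * (1 - p)) := by
      rw [show (8:ℝ) * (1 - p) = 4 * (2 * (1 - p)) by ring,
        Real.sqrt_mul (by norm_num : (0:ℝ) ≤ 4), hs4]
    have h2 : 4 * Real.sqrt (p * (1 - p)) = Real.sqrt (16 * (p * (1 - p))) := by
      rw [Real.sqrt_mul (by norm_num : (0:ℝ) ≤ 16)]
      rw [show Real.sqrt 16 = 4 by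
        rw [show (16:ℝ) = 4^2 by norm_num, Real.sqrt_sq (by norm_num : (0:ℝ) ≤ 4)]]
    rw [h1, h2]
    apply Real.sqrt_le_sqrt
    nlinarith
end

section
/- Let β > 0 and let p ∈ (0,1) satisfy p^β < β + 1 − √((β+1)² − 1). Then for all real numbers x, y with 0 < y < x ≤ 1: if x^β − y^β > 1 − p^β, then x^(−1/2) · y^(1/2) · (x^β − y^β) ≤ p^(1/2) · (1 − p^β). In other words, the function f(t) = t^β satisfies Assumption A at parameter p. -/
private lemma pow_ratio_aux (s r : ℝ) (hs : 0 < s) (hr0 : 0 < r) (hr1 : r ≤ 1) :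
    r ^ s * (1 + s * (1 - r)) ≤ 1 := by
  have hlog : Real.log r ≤ r - 1 := Real.log_le_sub_one_of_pos hr0
  have h2 : 1 + s * (1 - r) ≤ Real.exp (s * (1 - r)) := by
    have := Real.add_one_le_exp (s * (1 - r)); linarith
  have h3 : r ^ s = Real.exp (Real.log r * s) := Real.rpow_def_of_pos hr0 s
  have h4 : r ^ s * (1 + s * (1 - r)) ≤ Real.exp (Real.log r * s) * Real.exp (s * (1 - r)) := by
    rw [h3]
    exact mul_le_mul_of_nonneg_left h2 (Real.exp_nonneg _)
  rw [← Real.exp_add] at h4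
  have h5 : Real.log r * s + s * (1 - r) ≤ 0 := by nlinarith
  calc r ^ s * (1 + s * (1 - r)) ≤ Real.exp (Real.log r * s + s * (1 - r)) := h4
    _ ≤ Real.exp 0 := Real.exp_le_exp.2 h5
    _ = 1 := Real.exp_zero

private lemma key_lemma (s c m u : ℝ) (hs : 0 < s) (hu : 0 < u) (hum : u ≤ m)
    (hc : 0 < c) (hmsc : m ≤ s * c) :
    u ^ s * (m + c - u) ≤ m ^ s * c := by
  have hm : 0 < m := lt_of_lt_of_le hu hum
  set r := u / m with hr
  have hr0 : 0 < r := div_pos hu hm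
  have hr1 : r ≤ 1 := (div_le_one hm).2 hum
  have hu_eq : u = r * m := by rw [hr, div_mul_cancel₀ u hm.ne']
  have hpow : u ^ s = r ^ s * m ^ s := by
    rw [hu_eq, Real.mul_rpow hr0.le hm.le]
  have h1 : m + c - u ≤ c * (1 + s * (1 - r)) := by nlinarith
  have hrs : 0 ≤ r ^ s := Real.rpow_nonneg hr0.le s
  have hms : 0 ≤ m ^ s := Real.rpow_nonneg hm.le s
  have hmain := pow_ratio_aux s r hs hr0 hr1
  calc u ^ s * (m + c - u) = r ^ s * m ^ s * (m + c - u) := by rw [hpow]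
    _ ≤ r ^ s * m ^ s * (c * (1 + s * (1 - r))) := by
        apply mul_le_mul_of_nonneg_left h1 (by positivity)
    _ = m ^ s * c * (r ^ s * (1 + s * (1 - r))) := by ring
    _ ≤ m ^ s * c * 1 := by
        apply mul_le_mul_of_nonneg_left hmain (by positivity)
    _ = m ^ s * c := by ring

/-- The power function `f(t) = t^β`, `β > 0`, satisfies Assumption A at parameter `p`
whenever `p^β < β + 1 - √((β+1)² - 1)`. -/
theorem rpow_pos_satisfies_assumption (β : ℝ) (hβ : 0 < β)
    (p : ℝ) (hp0 : 0 < p) (hp1 : p < 1)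
    (hpβ : p ^ β < β + 1 - Real.sqrt ((β + 1) ^ 2 - 1)) :
    ∀ x y : ℝ, 0 < y → y < x → x ≤ 1 →
      x ^ β - y ^ β > 1 - p ^ β →
      x ^ (-(1 / 2) : ℝ) * y ^ ((1 / 2) : ℝ) * (x ^ β - y ^ β) ≤
        p ^ ((1 / 2) : ℝ) * (1 - p ^ β) := by
  intro x y hy hyx hx1 hgap
  have hx0 : 0 < x := hy.trans hyx
  set q := p ^ β with hq_def
  set c := 1 - q with hc_def
  set t := x ^ β with ht_def
  set u := y ^ β with hu_def
  set s := (1 : ℝ) / (2 * β) with hs_def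
  have hs : 0 < s := by rw [hs_def]; positivity
  have hq0 : 0 < q := Real.rpow_pos_of_pos hp0 β
  have hq1 : q < 1 := Real.rpow_lt_one hp0.le hp1 hβ
  have hc : 0 < c := by rw [hc_def]; linarith
  have ht1 : t ≤ 1 := Real.rpow_le_one hx0.le hx1 hβ.le
  have htpos : 0 < t := Real.rpow_pos_of_pos hx0 β
  have hu : 0 < u := Real.rpow_pos_of_pos hy β
  have hum : u ≤ t - c := by linarith
  have htc : 0 < t - c := lt_of_lt_of_le hu hum
  -- derive 2βq < c²
  have h2βq : 2 * β * q < c ^ 2 := by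
    have h0 : 0 < β + 1 - q := lt_of_le_of_lt (Real.sqrt_nonneg _) (by linarith)
    have h1 : (β + 1) ^ 2 - 1 < (β + 1 - q) ^ 2 := (Real.sqrt_lt' h0).1 (by linarith)
    rw [hc_def]; nlinarith
  have hmsc : t - c ≤ s * c := by
    rw [hs_def, div_mul_eq_mul_div, one_mul, le_div_iff₀ (by linarith : (0:ℝ) < 2 * β)]
    nlinarith
  have key : u ^ s * (t - u) ≤ (t - c) ^ s * c := by
    have h := key_lemma s c (t - c) u hs hu hum hc hmsc
    have heq : t - c + c - u = t - u := by ring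
    rwa [heq] at h
  -- rewrite rpow exponents
  have hbne : (β : ℝ) ≠ 0 := ne_of_gt hβ
  have hx_eq : t ^ (-s) = x ^ (-(1 / 2) : ℝ) := by
    rw [ht_def, ← Real.rpow_mul hx0.le]
    congr 1
    rw [hs_def]; field_simp
  have hy_eq : u ^ s = y ^ ((1 / 2) : ℝ) := by
    rw [hu_def, ← Real.rpow_mul hy.le]
    congr 1
    rw [hs_def]; field_simp
  have hp_eq : q ^ s = p ^ ((1 / 2) : ℝ) := by
    rw [hq_def, ← Real.rpow_mul hp0.le]
    congr 1
    rw [hs_def]; field_simp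
  rw [← hx_eq, ← hy_eq, ← hp_eq]
  -- final chain
  have hdle : (t - c) / t ≤ q := by
    rw [div_le_iff₀ htpos]
    nlinarith
  have hdiv : ((t - c) / t) ^ s ≤ q ^ s :=
    Real.rpow_le_rpow (by positivity) hdle hs.le
  have hts : 0 < t ^ s := Real.rpow_pos_of_pos htpos s
  have heq2 : t ^ (-s) * ((t - c) ^ s * c) = ((t - c) / t) ^ s * c := by
    rw [Real.div_rpow htc.le htpos.le, Real.rpow_neg htpos.le]
    field_simp
  have htneg : 0 ≤ t ^ (-s) := Real.rpow_nonneg htpos.le _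
  calc t ^ (-s) * u ^ s * (t - u) = t ^ (-s) * (u ^ s * (t - u)) := by ring
    _ ≤ t ^ (-s) * ((t - c) ^ s * c) := mul_le_mul_of_nonneg_left key htneg
    _ = ((t - c) / t) ^ s * c := heq2
    _ ≤ q ^ s * c := mul_le_mul_of_nonneg_right hdiv hc.le
end

section
/- Let β > 0 and let q ∈ (0,1) satisfy q < β + 1 − √((β+1)² − 1). Then for every real t with 0 < t < q, one has t·(1−t)^(2β)/(t + 1 − q) < q·(1−q)^(2β). -/
open Real Set

theorem h_beta_lt (β : ℝ) (hβ : 0 < β) (q : ℝ) (hq0 : 0 < q) (hq1 : q < 1)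
    (hq : q < β + 1 - Real.sqrt ((β + 1) ^ 2 - 1)) :
    ∀ t : ℝ, 0 < t → t < q →
      t * (1 - t) ^ (2 * β) / (t + 1 - q) < q * (1 - q) ^ (2 * β) := by
  intro t ht0 htq
  have hs : Real.sqrt ((β + 1) ^ 2 - 1) ^ 2 = (β + 1) ^ 2 - 1 := by
    rw [Real.sq_sqrt]; nlinarith
  have hsnn : 0 ≤ Real.sqrt ((β + 1) ^ 2 - 1) := Real.sqrt_nonneg _
  have hkey : 0 < (1 - q) ^ 2 - 2 * β * q := by nlinarith
  set c := 2 * β with hc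
  have hc0 : 0 < c := by positivity
  set f : ℝ → ℝ := fun x => x * (1 - x) ^ c / (x + 1 - q) with hf
  have hderiv : ∀ x ∈ Ioo (0 : ℝ) q, HasDerivAt f
      ((1 - x) ^ (c - 1) * ((1 - x) * (1 - q) - c * x * (x + 1 - q)) / (x + 1 - q) ^ 2) x := by
    intro x hx
    obtain ⟨hx0, hxq⟩ := hx
    have h1x : 0 < 1 - x := by linarith
    have hd : 0 < x + 1 - q := by linarith
    have h1 : HasDerivAt (fun y : ℝ => (1 - y) ^ c) (c * (1 - x) ^ (c - 1) * (-1)) x := by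
      exact (Real.hasDerivAt_rpow_const (x := 1 - x) (p := c) (Or.inl h1x.ne')).comp x
        ((hasDerivAt_id x).const_sub 1)
    have hnum : HasDerivAt (fun y : ℝ => y * (1 - y) ^ c)
        (1 * (1 - x) ^ c + x * (c * (1 - x) ^ (c - 1) * (-1))) x :=
      (hasDerivAt_id x).mul h1
    have hden : HasDerivAt (fun y : ℝ => y + 1 - q) 1 x := by
      simpa using ((hasDerivAt_id x).add_const 1).sub_const q
    have := hnum.div hden hd.ne'
    refine this.congr_deriv ?_
    have hsplit : (1 - x) ^ c = (1 - x) ^ (c - 1) * (1 - x) := by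
      rw [← Real.rpow_add_one h1x.ne' (c - 1)]; ring_nf
    rw [hsplit]
    field_simp
    ring
  have hmono : StrictMonoOn f (Icc (0 : ℝ) q) := by
    apply strictMonoOn_of_deriv_pos (convex_Icc 0 q)
    · apply ContinuousOn.div
      · exact (continuous_id.mul ((continuous_const.sub continuous_id).rpow_const
          (fun x => Or.inr hc0.le))).continuousOn
      · exact (continuous_id.add continuous_const |>.sub continuous_const).continuousOn
      · intro x hx
        rcases hx with ⟨hx0, hxq⟩
        have : 0 < x + 1 - q := by linarith
        exact this.ne'
    · intro x hx
      rw [interior_Icc] at hx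
      obtain ⟨hx0, hxq⟩ := hx
      have h1x : 0 < 1 - x := by linarith
      have hd : 0 < x + 1 - q := by linarith
      rw [(hderiv x ⟨hx0, hxq⟩).deriv]
      have hbr : 0 < (1 - x) * (1 - q) - c * x * (x + 1 - q) := by
        have h1 : (1 - q) ^ 2 ≤ (1 - x) * (1 - q) := by nlinarith
        have h3 : x * (x + 1 - q) < q := by nlinarith
        have h2 : c * x * (x + 1 - q) < c * q := by
          have := mul_lt_mul_of_pos_left h3 hc0
          linarith [this]
        nlinarith
      positivity
  have hfq : f q = q * (1 - q) ^ c := by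
    simp only [hf]
    rw [show q + 1 - q = 1 by ring, div_one]
  have := hmono ⟨ht0.le, htq.le⟩ ⟨hq0.le, le_refl q⟩ htq
  rwa [hfq] at this
end

section
/- Let β > 0 and q ∈ (0,1), and set t₀ = (1/(4β))·(√((2β+1)²(1−q)² + 8β(1−q)) − (2β+1)(1−q)). Then 0 < t₀ < 1, and the function h(t) = t·(1−t)^(2β)/(t + 1 − q) is monotonically increasing on [0, t₀] and monotonically decreasing on [t₀, 1]. -/
open Real Set

lemma aux_hasDerivAt (β q t : ℝ) (ht1 : t < 1) (hd : 0 < t + 1 - q) :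
    HasDerivAt (fun t : ℝ => t * (1 - t) ^ (2 * β) / (t + 1 - q))
      ((1 - t) ^ (2 * β - 1) *
        ((1 - q) - 2 * β * t ^ 2 - (2 * β + 1) * (1 - q) * t) / (t + 1 - q) ^ 2) t := by
  have h1t : (0:ℝ) < 1 - t := by linarith
  have hpow : HasDerivAt (fun t : ℝ => (1 - t) ^ (2 * β))
      (2 * β * (1 - t) ^ (2 * β - 1) * (-1)) t := by
    have := (Real.hasDerivAt_rpow_const (x := 1 - t) (p := 2 * β) (Or.inl h1t.ne')).comp t
      ((hasDerivAt_id t).const_sub 1)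
    simpa [Function.comp_def] using this
  have hnum : HasDerivAt (fun t : ℝ => t * (1 - t) ^ (2 * β))
      (1 * (1 - t) ^ (2 * β) + t * (2 * β * (1 - t) ^ (2 * β - 1) * (-1))) t :=
    (hasDerivAt_id t).mul hpow
  have hden : HasDerivAt (fun t : ℝ => t + 1 - q) 1 t := by
    simpa using ((hasDerivAt_id t).add_const 1).sub_const q
  have h := hnum.div hden hd.ne'
  refine h.congr_deriv ?_
  have hsplit : (1 - t) ^ (2 * β) = (1 - t) ^ (2 * β - 1) * (1 - t) := by
    rw [← Real.rpow_add_one h1t.ne' (2 * β - 1)]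
    ring_nf
  rw [hsplit]
  field_simp
  ring

theorem h_beta_monotone (β q : ℝ) (hβ : 0 < β) (hq0 : 0 < q) (hq1 : q < 1) :
    0 < (1 / (4 * β)) *
        (Real.sqrt ((2 * β + 1) ^ 2 * (1 - q) ^ 2 + 8 * β * (1 - q)) -
          (2 * β + 1) * (1 - q)) ∧
    (1 / (4 * β)) *
        (Real.sqrt ((2 * β + 1) ^ 2 * (1 - q) ^ 2 + 8 * β * (1 - q)) -
          (2 * β + 1) * (1 - q)) < 1 ∧
    MonotoneOn (fun t : ℝ => t * (1 - t) ^ (2 * β) / (t + 1 - q))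
      (Set.Icc 0 ((1 / (4 * β)) *
        (Real.sqrt ((2 * β + 1) ^ 2 * (1 - q) ^ 2 + 8 * β * (1 - q)) -
          (2 * β + 1) * (1 - q)))) ∧
    AntitoneOn (fun t : ℝ => t * (1 - t) ^ (2 * β) / (t + 1 - q))
      (Set.Icc ((1 / (4 * β)) *
        (Real.sqrt ((2 * β + 1) ^ 2 * (1 - q) ^ 2 + 8 * β * (1 - q)) -
          (2 * β + 1) * (1 - q))) 1) := by
  have hq' : (0:ℝ) < 1 - q := by linarith
  have hc0 : (0:ℝ) ≤ (2 * β + 1) * (1 - q) := by positivity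
  have hs0 : (0:ℝ) ≤ (2 * β + 1) ^ 2 * (1 - q) ^ 2 + 8 * β * (1 - q) := by positivity
  set s := Real.sqrt ((2 * β + 1) ^ 2 * (1 - q) ^ 2 + 8 * β * (1 - q)) with hs
  have hs_sq : s ^ 2 = (2 * β + 1) ^ 2 * (1 - q) ^ 2 + 8 * β * (1 - q) := Real.sq_sqrt hs0
  set t₀ := (1 / (4 * β)) * (s - (2 * β + 1) * (1 - q)) with ht₀
  clear_value s t₀
  have hcs : (2 * β + 1) * (1 - q) < s := by
    rw [hs]
    rw [show (2 * β + 1) ^ 2 * (1 - q) ^ 2 = ((2 * β + 1) * (1 - q)) ^ 2 by ring]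
    refine (Real.lt_sqrt hc0).mpr ?_
    nlinarith
  have ht₀pos : 0 < t₀ := by
    rw [ht₀]
    have : 0 < s - (2 * β + 1) * (1 - q) := by linarith
    positivity
  have hslt : s < 4 * β + (2 * β + 1) * (1 - q) := by
    rw [hs]
    refine (Real.sqrt_lt' (by positivity)).mpr ?_
    nlinarith [mul_pos hβ hq', mul_pos (mul_pos hβ hβ) hq', sq_nonneg β]
  have ht₀lt1 : t₀ < 1 := by
    rw [ht₀, div_mul_eq_mul_div, one_mul, div_lt_one (by positivity)]
    linarith
  have h4 : 4 * β * t₀ = s - (2 * β + 1) * (1 - q) := by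
    rw [ht₀]; field_simp
  have key8 : 8 * β * (2 * β * t₀ ^ 2 + (2 * β + 1) * (1 - q) * t₀ - (1 - q)) = 0 := by
    linear_combination (4 * β * t₀ + (2 * β + 1) * (1 - q) + s) * h4 + hs_sq
  have key : 2 * β * t₀ ^ 2 + (2 * β + 1) * (1 - q) * t₀ = 1 - q := by
    rcases mul_eq_zero.mp key8 with h | h
    · exact absurd h (by positivity)
    · linarith
  refine ⟨ht₀pos, ht₀lt1, ?_, ?_⟩
  · apply monotoneOn_of_deriv_nonneg (convex_Icc 0 t₀)
    · intro x hx
      have hx1 : x < 1 := lt_of_le_of_lt hx.2 ht₀lt1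
      have hd : 0 < x + 1 - q := by have := hx.1; linarith
      exact ((aux_hasDerivAt β q x hx1 hd).differentiableAt.continuousAt).continuousWithinAt
    · rw [interior_Icc]
      intro x hx
      have hx1 : x < 1 := lt_trans hx.2 ht₀lt1
      have hd : 0 < x + 1 - q := by have := hx.1; linarith
      exact (aux_hasDerivAt β q x hx1 hd).differentiableAt.differentiableWithinAt
    · rw [interior_Icc]
      intro x hx
      have hx1 : x < 1 := lt_trans hx.2 ht₀lt1
      have hd : 0 < x + 1 - q := by have := hx.1; linarith
      rw [(aux_hasDerivAt β q x hx1 hd).deriv]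
      have hg : 0 ≤ (1 - q) - 2 * β * x ^ 2 - (2 * β + 1) * (1 - q) * x := by
        have h1 : 0 ≤ t₀ - x := by linarith [hx.2]
        have h2 : 0 ≤ t₀ + x := by linarith [hx.1, ht₀pos]
        nlinarith [mul_nonneg (mul_nonneg hβ.le h1) h2, mul_nonneg hc0 h1, key]
      have hpow : (0:ℝ) ≤ (1 - x) ^ (2 * β - 1) := Real.rpow_nonneg (by linarith) _
      positivity
  · apply antitoneOn_of_deriv_nonpos (convex_Icc t₀ 1)
    · apply ContinuousOn.div
      · exact (continuous_id.mul ((Real.continuous_rpow_const (by positivity)).comp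
          (continuous_const.sub continuous_id))).continuousOn
      · fun_prop
      · intro x hx
        have : 0 < x + 1 - q := by have := hx.1; linarith [ht₀pos]
        exact this.ne'
    · rw [interior_Icc]
      intro x hx
      have hd : 0 < x + 1 - q := by have := hx.1; linarith [ht₀pos]
      exact (aux_hasDerivAt β q x hx.2 hd).differentiableAt.differentiableWithinAt
    · rw [interior_Icc]
      intro x hx
      have hd : 0 < x + 1 - q := by have := hx.1; linarith [ht₀pos]
      rw [(aux_hasDerivAt β q x hx.2 hd).deriv]
      have hg : (1 - q) - 2 * β * x ^ 2 - (2 * β + 1) * (1 - q) * x ≤ 0 := by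
        have h1 : 0 ≤ x - t₀ := by linarith [hx.1]
        have h2 : 0 ≤ x + t₀ := by linarith [hx.1, ht₀pos]
        nlinarith [mul_nonneg (mul_nonneg hβ.le h1) h2, mul_nonneg hc0 h1, key]
      have hpow : (0:ℝ) ≤ (1 - x) ^ (2 * β - 1) := Real.rpow_nonneg (by linarith [hx.2]) _
      have hden : (0:ℝ) < (x + 1 - q) ^ 2 := by positivity
      exact div_nonpos_of_nonpos_of_nonneg (mul_nonpos_of_nonneg_of_nonpos hpow hg) hden.le
end

section
/- Let β > 0 and q ∈ (0,1), and set t₀ = (1/(4β))·(√((2β+1)²(1−q)² + 8β(1−q)) − (2β+1)(1−q)). Then q < t₀ if and only if q² − 2(β+1)q + 1 > 0; in particular, if q < β + 1 − √((β+1)² − 1) then q < t₀. -/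
theorem q_lt_t0_iff (β q : ℝ) (hβ : 0 < β) (hq0 : 0 < q) (hq1 : q < 1) :
    (q < (1 / (4 * β)) *
        (Real.sqrt ((2 * β + 1) ^ 2 * (1 - q) ^ 2 + 8 * β * (1 - q)) -
          (2 * β + 1) * (1 - q)) ↔
      q ^ 2 - 2 * (β + 1) * q + 1 > 0) ∧
    (q < β + 1 - Real.sqrt ((β + 1) ^ 2 - 1) →
      q < (1 / (4 * β)) *
        (Real.sqrt ((2 * β + 1) ^ 2 * (1 - q) ^ 2 + 8 * β * (1 - q)) -
          (2 * β + 1) * (1 - q))) := by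
  have h4β : (0:ℝ) < 4 * β := by linarith
  have hq1' : 0 < 1 - q := by linarith
  have hx : 0 ≤ q * (4 * β) + (2 * β + 1) * (1 - q) := by nlinarith
  have key : q < (1 / (4 * β)) *
      (Real.sqrt ((2 * β + 1) ^ 2 * (1 - q) ^ 2 + 8 * β * (1 - q)) -
        (2 * β + 1) * (1 - q)) ↔ q ^ 2 - 2 * (β + 1) * q + 1 > 0 := by
    rw [one_div, inv_mul_eq_div, lt_div_iff₀ h4β, lt_sub_iff_add_lt,
      Real.lt_sqrt hx]
    constructor
    · intro h; nlinarith
    · intro h; nlinarith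
  refine ⟨key, fun h => key.mpr ?_⟩
  have hd : (0:ℝ) ≤ (β + 1) ^ 2 - 1 := by nlinarith
  have hs : Real.sqrt ((β + 1) ^ 2 - 1) ^ 2 = (β + 1) ^ 2 - 1 :=
    Real.sq_sqrt hd
  have hs0 : 0 ≤ Real.sqrt ((β + 1) ^ 2 - 1) := Real.sqrt_nonneg _
  have h1 : Real.sqrt ((β + 1) ^ 2 - 1) < β + 1 - q := by linarith
  nlinarith [sq_nonneg (β + 1 - q)]
end

section
/- Let n ≥ 1 and let X, Y be n×n complex matrices such that X is positive semidefinite, Y is positive definite, and Y − X is positive semidefinite. Then Tr(X·Y⁻¹·X) ≤ Tr X. -/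
open scoped ComplexOrder

open Matrix in
lemma fromBlocks_psd_aux {n : ℕ} (X Y : Matrix (Fin n) (Fin n) ℂ)
    (hX : X.PosSemidef) (hYX : (Y - X).PosSemidef) :
    (Matrix.fromBlocks Y X Xᴴ X).PosSemidef := by
  refine Matrix.posSemidef_iff_dotProduct_mulVec.mpr ⟨?_, ?_⟩
  · have hYh : Y.IsHermitian := by
      have := hYX.1.add hX.1
      simpa using this
    exact Matrix.isHermitian_fromBlocks_iff.mpr ⟨hYh, rfl, by simp, hX.1⟩
  · intro x
    set u := x ∘ Sum.inl
    set v := x ∘ Sum.inr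
    have hx : x = Sum.elim u v := (Sum.elim_comp_inl_inr x).symm
    have hstar : star x = Sum.elim (star u) (star v) := by
      rw [hx]; funext i; cases i <;> rfl
    have key : star x ⬝ᵥ (Matrix.fromBlocks Y X Xᴴ X *ᵥ x)
        = star u ⬝ᵥ ((Y - X) *ᵥ u) + star (u + v) ⬝ᵥ (X *ᵥ (u + v)) := by
      rw [hstar]
      conv_lhs => rw [hx]
      rw [Matrix.fromBlocks_mulVec, sumElim_dotProduct_sumElim]
      have hXh : (Xᴴ *ᵥ u) = X *ᵥ u := by rw [hX.1]
      simp only [Sum.elim_comp_inl, Sum.elim_comp_inr]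
      rw [hXh, Matrix.sub_mulVec, Matrix.mulVec_add, star_add]
      simp only [dotProduct_add, add_dotProduct, dotProduct_sub]
      ring
    rw [key]
    exact add_nonneg (hYX.dotProduct_mulVec_nonneg u) (hX.dotProduct_mulVec_nonneg (u + v))

theorem trace_X_inv_Y_X_le {n : ℕ} (hn : 1 ≤ n) (X Y : Matrix (Fin n) (Fin n) ℂ)
    (hX : X.PosSemidef) (hY : Y.PosDef) (hYX : (Y - X).PosSemidef) :
    (X * Y⁻¹ * X).trace ≤ X.trace := by
  have : Invertible Y := hY.isUnit.invertible
  have h := (Matrix.PosDef.fromBlocks₁₁ X X hY).mp (fromBlocks_psd_aux X Y hX hYX)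
  rw [hX.1] at h
  have htr : 0 ≤ (X - X * Y⁻¹ * X).trace := by
    rw [Matrix.trace]
    apply Finset.sum_nonneg
    intro i _
    have := h.dotProduct_mulVec_nonneg (Pi.single i 1)
    simpa [dotProduct, Matrix.mulVec, Pi.single_apply] using this
  rw [Matrix.trace_sub] at htr
  exact sub_nonneg.mp htr
end
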